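/- Determinant identity for elementary off-diagonal blocks, even case (Lemma): Let u : Fin N₁ → Γ and v : Fin N₂ → Γ be weight maps all of whose values are even, and let D_u and D_v be maps satisfying the graded-determinant axioms for u and for v (with the same linear order ≼ on Γ). Let P : Matrix (Fin N₁) (Fin N₂) A satisfy P α j ∈ 𝒜 (u α + v j) for all α, j, and let Q : Matrix (Fin N₂) (Fin N₁) A satisfy Q j α ∈ 𝒜 (v j + u α) for all j, α. If P has at most one nonzero entry, or Q has at most one nonzero entry, then 1 + P * Q is a degree-zero graded matrix for u, 1 + Q * P is a degree-zero graded matrix for v, and D_u(1 + P * Q) = D_v(1 + Q * P). -/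

import Mathlib

open Matrix

abbrev Gamma (n : ℕ) := Fin n → ZMod 2

def gpair {n : ℕ} (γ δ : Gamma n) : ZMod 2 := ∑ i, γ i * δ i

def gsign {n : ℕ} (γ δ : Gamma n) : ℤ := if gpair γ δ = 1 then -1 else 1

def GammaEven {n : ℕ} (γ : Gamma n) : Prop := gpair γ γ = 0

instance {n : ℕ} : DecidablePred (GammaEven (n := n)) := fun γ =>
  inferInstanceAs (Decidable (gpair γ γ = 0))

/-- `Γ`-graded commutativity of the graded algebra `A`:
`b * a = sign(γ,δ) • (a * b)` for homogeneous `a, b`. -/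
def GradedComm {n : ℕ} {K A : Type*} [Field K] [Ring A] [Algebra K A]
    (𝒜 : Gamma n → Submodule K A) : Prop :=
  ∀ (γ δ : Gamma n) (a b : A), a ∈ 𝒜 γ → b ∈ 𝒜 δ → b * a = gsign γ δ • (a * b)

/-- `X ∈ M^x(w)` : the matrix `X` is homogeneous of degree `x` w.r.t. the weight map `w`. -/
def Mdeg {n : ℕ} {K A : Type*} [Field K] [Ring A] [Algebra K A]
    (𝒜 : Gamma n → Submodule K A) {ι : Type*} (w : ι → Gamma n) (x : Gamma n)
    (X : Matrix ι ι A) : Prop :=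
  ∀ α β, X α β ∈ 𝒜 (w α + w β + x)

/-- `X ∈ M⁰(w)` : the matrix `X` is homogeneous of degree `0` w.r.t. the weight map `w`. -/
def Mdeg0 {n : ℕ} {K A : Type*} [Field K] [Ring A] [Algebra K A]
    (𝒜 : Gamma n → Submodule K A) {ι : Type*} (w : ι → Gamma n)
    (X : Matrix ι ι A) : Prop :=
  ∀ α β, X α β ∈ 𝒜 (w α + w β)

/-- Leibniz determinant over a (not necessarily commutative) ring, with the product
taken in the order given by the linear order on the index type. -/
def listDet {ι : Type*} [Fintype ι] [LinearOrder ι] {A : Type*} [Ring A]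
    (X : Matrix ι ι A) : A :=
  ∑ σ : Equiv.Perm ι, (Equiv.Perm.sign σ : ℤ) •
    ((Finset.sort Finset.univ (· ≤ ·)).map fun i => X (σ i) i).prod

/-- The product over the values `γ` in the range of `v` (ordered by `lo`) of the ordinary
determinants of the diagonal blocks `{α | v α = γ}` of `X`. -/
def detProd {n : ℕ} (lo : LinearOrder (Gamma n)) {ι : Type*} [Fintype ι] [LinearOrder ι]
    {A : Type*} [Ring A] (v : ι → Gamma n) (X : Matrix ι ι A) : A :=
  letI : LinearOrder (Gamma n) := lo
  ((Finset.sort (Finset.image v Finset.univ) (· ≤ ·)).map fun γ =>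
    listDet (Matrix.of fun a b : {α : ι // v α = γ} => X a.1 b.1)).prod

/-- The graded-determinant axioms for a map `D` on degree-zero graded matrices with weight
map `v` and a fixed linear order `lo` on `Γ`: `D` is valued in `𝒜 0`, is multiplicative,
equals the product of the ordinary block determinants on block-diagonal matrices, and
equals `1` on block-unitriangular matrices. -/
def DetAxioms {n : ℕ} {K A : Type*} [Field K] [Ring A] [Algebra K A]
    (𝒜 : Gamma n → Submodule K A) (lo : LinearOrder (Gamma n))
    {ι : Type*} [Fintype ι] [LinearOrder ι] (v : ι → Gamma n)
    (D : Matrix ι ι A → A) : Prop :=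
  (∀ X, Mdeg0 𝒜 v X → D X ∈ 𝒜 0) ∧
  (∀ X Y, Mdeg0 𝒜 v X → Mdeg0 𝒜 v Y → D (X * Y) = D X * D Y) ∧
  (∀ X, Mdeg0 𝒜 v X → (∀ α β, v α ≠ v β → X α β = 0) → D X = detProd lo v X) ∧
  (∀ X, Mdeg0 𝒜 v X → (∀ α β, v α = v β → X α β = if α = β then (1 : A) else 0) →
    ((∀ α β, lo.lt (v α) (v β) → X α β = 0) ∨ (∀ α β, lo.lt (v β) (v α) → X α β = 0)) →
    D X = 1)

/-- A matrix is elementary if it has at most one nonzero entry. -/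
def Elementary {ι κ A : Type*} [Zero A] (P : Matrix ι κ A) : Prop :=
  ∀ α j α' j', P α j ≠ 0 → P α' j' ≠ 0 → α = α' ∧ j = j'

lemma gamma_add_self {n : ℕ} (γ : Gamma n) : γ + γ = 0 := by
  funext i
  show γ i + γ i = 0
  have h : ∀ x : ZMod 2, x + x = 0 := by decide
  exact h _

lemma gpair_self_eq_sum {n : ℕ} (γ : Gamma n) : gpair γ γ = ∑ i, γ i := by
  unfold gpair
  refine Finset.sum_congr rfl fun i _ => ?_
  have h : ∀ x : ZMod 2, x * x = x := by decide
  exact h _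

lemma even_add_even {n : ℕ} {γ δ : Gamma n} (hγ : GammaEven γ) (hδ : GammaEven δ) :
    gpair (γ + δ) (γ + δ) = 0 := by
  rw [gpair_self_eq_sum]
  unfold GammaEven at hγ hδ
  rw [gpair_self_eq_sum] at hγ hδ
  calc ∑ i, (γ + δ) i = ∑ i, (γ i + δ i) := rfl
    _ = (∑ i, γ i) + ∑ i, δ i := Finset.sum_add_distrib
    _ = 0 := by rw [hγ, hδ, add_zero]

lemma gsign_of_zero {n : ℕ} {γ δ : Gamma n} (h : gpair γ δ = 0) : gsign γ δ = 1 := by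
  unfold gsign
  rw [h]
  norm_num

lemma prod_map_single {ι A : Type*} [Monoid A] (f : ι → A) (a0 : ι) :
    ∀ (l : List ι), l.Nodup → a0 ∈ l → (∀ x, x ≠ a0 → f x = 1) →
      (l.map f).prod = f a0 := by
  intro l
  induction l with
  | nil => simp
  | cons a l ih =>
    intro hnd hmem hf
    rw [List.map_cons, List.prod_cons]
    rcases List.mem_cons.mp hmem with h | h
    · subst h
      have h1 : (l.map f).prod = 1 := by
        refine List.prod_eq_one fun x hx => ?_
        obtain ⟨b, hb, rfl⟩ := List.mem_map.mp hx
        exact hf b (fun e => (List.nodup_cons.mp hnd).1 (e ▸ hb))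
      rw [h1, mul_one]
    · rw [hf a (fun e => (List.nodup_cons.mp hnd).1 (e ▸ h)), one_mul,
        ih (List.nodup_cons.mp hnd).2 h hf]

lemma listDet_eq_prod_diag {ι : Type*} [Fintype ι] [LinearOrder ι] {A : Type*} [Ring A]
    (X : Matrix ι ι A) (h : ∀ σ : Equiv.Perm ι, σ ≠ 1 → ∃ i, X (σ i) i = 0) :
    listDet X = ((Finset.sort (Finset.univ : Finset ι) (· ≤ ·)).map fun i => X i i).prod := by
  unfold listDet
  rw [Finset.sum_eq_single 1]
  · simp
  · intro σ _ hσ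
    obtain ⟨i, hi⟩ := h σ hσ
    have hmem : (0 : A) ∈ (Finset.sort (Finset.univ : Finset ι) (· ≤ ·)).map
        fun i => X (σ i) i :=
      List.mem_map.mpr ⟨i, Finset.mem_sort _ |>.mpr (Finset.mem_univ i), hi⟩
    rw [List.prod_eq_zero hmem, smul_zero]
  · intro h1; exact absurd (Finset.mem_univ 1) h1


section RC
variable {ι A : Type*} [Fintype ι] [DecidableEq ι] [Ring A]

def NRmat (α0 : ι) (s : ι → A) : Matrix ι ι A :=
  Matrix.of fun α β => if α = α0 then s β else 0

def Rmat (α0 : ι) (s : ι → A) : Matrix ι ι A := 1 + NRmat α0 s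

def NCmat (β0 : ι) (s : ι → A) : Matrix ι ι A :=
  Matrix.of fun α β => if β = β0 then s α else 0

def Cmat (β0 : ι) (s : ι → A) : Matrix ι ι A := 1 + NCmat β0 s

lemma Rmat_apply (α0 : ι) (s : ι → A) (α β : ι) :
    Rmat α0 s α β = (if α = β then 1 else 0) + (if α = α0 then s β else 0) := by
  simp [Rmat, NRmat, Matrix.add_apply, Matrix.one_apply]

lemma Cmat_apply (β0 : ι) (s : ι → A) (α β : ι) :
    Cmat β0 s α β = (if α = β then 1 else 0) + (if β = β0 then s α else 0) := by
  simp [Cmat, NCmat, Matrix.add_apply, Matrix.one_apply]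

lemma NRmat_mul (α0 : ι) (s t : ι → A) :
    NRmat α0 s * NRmat α0 t = NRmat α0 fun β => s α0 * t β := by
  ext α β
  rw [Matrix.mul_apply]
  simp only [NRmat, Matrix.of_apply, ite_mul, zero_mul, mul_ite, mul_zero]
  by_cases h : α = α0 <;> simp [h, Finset.sum_ite_eq' Finset.univ α0]

lemma NRmat_add (α0 : ι) (s t : ι → A) :
    NRmat α0 (s + t) = NRmat α0 s + NRmat α0 t := by
  ext α β
  simp only [NRmat, Matrix.of_apply, Matrix.add_apply, Pi.add_apply]
  split <;> simp

lemma Rmat_mul (α0 : ι) (s t : ι → A) (hs : s α0 = 0) :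
    Rmat α0 s * Rmat α0 t = Rmat α0 (s + t) := by
  have hNN : NRmat α0 s * NRmat α0 t = 0 := by
    rw [NRmat_mul, hs]
    ext α β
    simp [NRmat]
  unfold Rmat
  rw [NRmat_add]
  rw [add_mul, mul_add, mul_add, one_mul, one_mul, mul_one, hNN, add_zero]
  abel

lemma NCmat_mul (β0 : ι) (s t : ι → A) :
    NCmat β0 s * NCmat β0 t = NCmat β0 fun α => s α * t β0 := by
  ext α β
  rw [Matrix.mul_apply]
  simp only [NCmat, Matrix.of_apply, ite_mul, zero_mul, mul_ite, mul_zero]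
  by_cases h : β = β0 <;> simp [h, Finset.sum_ite_eq Finset.univ β0]

lemma NCmat_add (β0 : ι) (s t : ι → A) :
    NCmat β0 (s + t) = NCmat β0 s + NCmat β0 t := by
  ext α β
  simp only [NCmat, Matrix.of_apply, Matrix.add_apply, Pi.add_apply]
  split <;> simp

lemma Cmat_mul (β0 : ι) (s t : ι → A) (ht : t β0 = 0) :
    Cmat β0 s * Cmat β0 t = Cmat β0 (s + t) := by
  have hNN : NCmat β0 s * NCmat β0 t = 0 := by
    rw [NCmat_mul, ht]
    ext α β
    simp [NCmat]
  unfold Cmat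
  rw [NCmat_add]
  rw [add_mul, mul_add, mul_add, one_mul, one_mul, mul_one, hNN, add_zero]
  abel

end RC

set_option linter.unusedSectionVars false

section Graded
variable {n : ℕ} {K A : Type*} [Field K] [Ring A] [Algebra K A]
  {ι : Type*} [Fintype ι] [DecidableEq ι]
  (𝒜 : Gamma n → Submodule K A) [GradedAlgebra 𝒜]

lemma one_mem_deg (α β : ι) (w : ι → Gamma n) :
    (if α = β then (1:A) else 0) ∈ 𝒜 (w α + w β) := by
  split
  · next h =>
    subst h
    rw [gamma_add_self]
    exact SetLike.one_mem_graded 𝒜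
  · exact zero_mem _

lemma Mdeg0_Rmat (w : ι → Gamma n) (α0 : ι) (s : ι → A)
    (hs : ∀ β, s β ∈ 𝒜 (w α0 + w β)) : Mdeg0 𝒜 w (Rmat α0 s) := by
  intro α β
  rw [Rmat_apply]
  refine add_mem (one_mem_deg 𝒜 α β w) ?_
  split
  · next h => subst h; exact hs β
  · exact zero_mem _

lemma Mdeg0_Cmat (w : ι → Gamma n) (β0 : ι) (s : ι → A)
    (hs : ∀ α, s α ∈ 𝒜 (w α + w β0)) : Mdeg0 𝒜 w (Cmat β0 s) := by
  intro α β
  rw [Cmat_apply]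
  refine add_mem (one_mem_deg 𝒜 α β w) ?_
  split
  · next h => subst h; exact hs α
  · exact zero_mem _

end Graded

lemma perm_exists_ne {ι : Type*} (σ : Equiv.Perm ι) (hσ : σ ≠ 1) : ∃ i, σ i ≠ i := by
  by_contra h
  push_neg at h
  exact hσ (Equiv.ext fun i => by simp [h i])

lemma detProd_Rmat {n : ℕ} {A : Type*} [Ring A] {ι : Type*} [Fintype ι] [DecidableEq ι]
    [LinearOrder ι] (lo : LinearOrder (Gamma n)) (w : ι → Gamma n) (α0 : ι) (s : ι → A)
    (hs : ∀ β, w β ≠ w α0 → s β = 0) :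
    detProd lo w (Rmat α0 s) = 1 + s α0 := by
  letI := lo
  unfold detProd
  have hblock1 : ∀ γ : Gamma n, γ ≠ w α0 →
      listDet (Matrix.of fun a b : {α : ι // w α = γ} => Rmat α0 s a.1 b.1) = 1 := by
    intro γ hγ
    rw [listDet_eq_prod_diag]
    · refine List.prod_eq_one fun x hx => ?_
      obtain ⟨a, _, rfl⟩ := List.mem_map.mp hx
      show Rmat α0 s a.1 a.1 = 1
      have h2 : a.1 ≠ α0 := fun h => hγ (by rw [← a.2, h])
      rw [Rmat_apply, if_pos rfl, if_neg h2, add_zero]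
    · intro σ hσ
      obtain ⟨i, hi⟩ := perm_exists_ne σ hσ
      refine ⟨i, ?_⟩
      show Rmat α0 s (σ i).1 i.1 = 0
      have h1 : (σ i).1 ≠ i.1 := fun h => hi (Subtype.ext h)
      have h2 : (σ i).1 ≠ α0 := fun h => hγ (by rw [← (σ i).2, h])
      rw [Rmat_apply, if_neg h1, if_neg h2, add_zero]
  have hmain : listDet (Matrix.of fun a b : {α : ι // w α = w α0} => Rmat α0 s a.1 b.1)
      = 1 + s α0 := by
    have a0 : {α : ι // w α = w α0} := ⟨α0, rfl⟩
    rw [listDet_eq_prod_diag]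
    · have hf : ∀ x : {α : ι // w α = w α0}, x ≠ (⟨α0, rfl⟩ : {α : ι // w α = w α0}) →
          Rmat α0 s x.1 x.1 = 1 := by
        intro x hx
        rw [Rmat_apply, if_pos rfl, if_neg (fun h => hx (Subtype.ext h)), add_zero]
      have := prod_map_single (fun i : {α : ι // w α = w α0} => Rmat α0 s i.1 i.1)
        (⟨α0, rfl⟩ : {α : ι // w α = w α0}) (Finset.sort Finset.univ (· ≤ ·))
        (Finset.sort_nodup _ _) ((Finset.mem_sort _).mpr (Finset.mem_univ _)) hf
      simp only [Matrix.of_apply]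
      rw [this]
      show Rmat α0 s α0 α0 = 1 + s α0
      rw [Rmat_apply, if_pos rfl, if_pos rfl]
    · intro σ hσ
      obtain ⟨i, hi⟩ := perm_exists_ne σ hσ
      by_cases hia : σ i = (⟨α0, rfl⟩ : {α : ι // w α = w α0})
      · set a0 : {α : ι // w α = w α0} := ⟨α0, rfl⟩ with ha0def
        have hne : σ a0 ≠ a0 := by
          intro h
          exact hi (hia.trans (σ.injective (h.trans hia.symm)))
        refine ⟨a0, ?_⟩
        show Rmat α0 s (σ a0).1 a0.1 = 0
        have h1 : (σ a0).1 ≠ a0.1 := fun h => hne (Subtype.ext h)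
        have h2 : (σ a0).1 ≠ α0 := h1
        rw [Rmat_apply, if_neg h1, if_neg h2, add_zero]
      · refine ⟨i, ?_⟩
        show Rmat α0 s (σ i).1 i.1 = 0
        have h1 : (σ i).1 ≠ i.1 := fun h => hi (Subtype.ext h)
        have h2 : (σ i).1 ≠ α0 := fun h => hia (Subtype.ext h)
        rw [Rmat_apply, if_neg h1, if_neg h2, add_zero]
  rw [prod_map_single _ (w α0) _ (Finset.sort_nodup _ _)
      ((Finset.mem_sort _).mpr (Finset.mem_image.mpr ⟨α0, Finset.mem_univ _, rfl⟩))
      hblock1]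
  exact hmain

lemma detProd_Cmat {n : ℕ} {A : Type*} [Ring A] {ι : Type*} [Fintype ι] [DecidableEq ι]
    [LinearOrder ι] (lo : LinearOrder (Gamma n)) (w : ι → Gamma n) (β0 : ι) (s : ι → A) :
    detProd lo w (Cmat β0 s) = 1 + s β0 := by
  letI := lo
  unfold detProd
  have hblock1 : ∀ γ : Gamma n, γ ≠ w β0 →
      listDet (Matrix.of fun a b : {α : ι // w α = γ} => Cmat β0 s a.1 b.1) = 1 := by
    intro γ hγ
    rw [listDet_eq_prod_diag]
    · refine List.prod_eq_one fun x hx => ?_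
      obtain ⟨a, _, rfl⟩ := List.mem_map.mp hx
      show Cmat β0 s a.1 a.1 = 1
      have h2 : a.1 ≠ β0 := fun h => hγ (by rw [← a.2, h])
      rw [Cmat_apply, if_pos rfl, if_neg h2, add_zero]
    · intro σ hσ
      obtain ⟨i, hi⟩ := perm_exists_ne σ hσ
      refine ⟨i, ?_⟩
      show Cmat β0 s (σ i).1 i.1 = 0
      have h1 : (σ i).1 ≠ i.1 := fun h => hi (Subtype.ext h)
      have h2 : i.1 ≠ β0 := fun h => hγ (by rw [← i.2, h])
      rw [Cmat_apply, if_neg h1, if_neg h2, add_zero]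
  have hmain : listDet (Matrix.of fun a b : {α : ι // w α = w β0} => Cmat β0 s a.1 b.1)
      = 1 + s β0 := by
    rw [listDet_eq_prod_diag]
    · have hf : ∀ x : {α : ι // w α = w β0}, x ≠ (⟨β0, rfl⟩ : {α : ι // w α = w β0}) →
          Cmat β0 s x.1 x.1 = 1 := by
        intro x hx
        rw [Cmat_apply, if_pos rfl, if_neg (fun h => hx (Subtype.ext h)), add_zero]
      have := prod_map_single (fun i : {α : ι // w α = w β0} => Cmat β0 s i.1 i.1)
        (⟨β0, rfl⟩ : {α : ι // w α = w β0}) (Finset.sort Finset.univ (· ≤ ·))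
        (Finset.sort_nodup _ _) ((Finset.mem_sort _).mpr (Finset.mem_univ _)) hf
      simp only [Matrix.of_apply]
      rw [this]
      show Cmat β0 s β0 β0 = 1 + s β0
      rw [Cmat_apply, if_pos rfl, if_pos rfl]
    · intro σ hσ
      obtain ⟨i, hi⟩ := perm_exists_ne σ hσ
      by_cases hib : i = (⟨β0, rfl⟩ : {α : ι // w α = w β0})
      · set b0 : {α : ι // w α = w β0} := ⟨β0, rfl⟩ with hb0def
        set k : {α : ι // w α = w β0} := σ b0 with hkdef
        have hk : k ≠ b0 := by rw [hkdef, ← hib]; exact hi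
        have hσk : σ k ≠ k := by
          intro h
          exact hk (σ.injective (h.trans hkdef))
        refine ⟨k, ?_⟩
        show Cmat β0 s (σ k).1 k.1 = 0
        have h1 : (σ k).1 ≠ k.1 := fun h => hσk (Subtype.ext h)
        have h2 : k.1 ≠ β0 := fun h => hk (Subtype.ext h)
        rw [Cmat_apply, if_neg h1, if_neg h2, add_zero]
      · refine ⟨i, ?_⟩
        show Cmat β0 s (σ i).1 i.1 = 0
        have h1 : (σ i).1 ≠ i.1 := fun h => hi (Subtype.ext h)
        have h2 : i.1 ≠ β0 := fun h => hib (Subtype.ext h)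
        rw [Cmat_apply, if_neg h1, if_neg h2, add_zero]
  rw [prod_map_single _ (w β0) _ (Finset.sort_nodup _ _)
      ((Finset.mem_sort _).mpr (Finset.mem_image.mpr ⟨β0, Finset.mem_univ _, rfl⟩))
      hblock1]
  exact hmain

section Entry
variable {ι A : Type*} [DecidableEq ι] [Fintype ι] [Ring A]

lemma Rmat_entry_eq_diag (α0 : ι) (t : ι → A) (α β : ι) (h : α = α0 → t β = 0) :
    Rmat α0 t α β = if α = β then 1 else 0 := by
  rw [Rmat_apply]
  rcases eq_or_ne α α0 with h' | h'
  · rw [if_pos h', h h', add_zero]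
  · rw [if_neg h', add_zero]

lemma Rmat_entry_zero (α0 : ι) (t : ι → A) (α β : ι) (hne : α ≠ β) (h : α = α0 → t β = 0) :
    Rmat α0 t α β = 0 := by
  rw [Rmat_entry_eq_diag α0 t α β h, if_neg hne]

lemma Cmat_entry_eq_diag (β0 : ι) (t : ι → A) (α β : ι) (h : β = β0 → t α = 0) :
    Cmat β0 t α β = if α = β then 1 else 0 := by
  rw [Cmat_apply]
  rcases eq_or_ne β β0 with h' | h'
  · rw [if_pos h', h h', add_zero]
  · rw [if_neg h', add_zero]

lemma Cmat_entry_zero (β0 : ι) (t : ι → A) (α β : ι) (hne : α ≠ β) (h : β = β0 → t α = 0) :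
    Cmat β0 t α β = 0 := by
  rw [Cmat_entry_eq_diag β0 t α β h, if_neg hne]

end Entry

lemma D_Rmat {n : ℕ} {K A : Type*} [Field K] [Ring A] [Algebra K A]
    (𝒜 : Gamma n → Submodule K A) [GradedAlgebra 𝒜]
    {ι : Type*} [Fintype ι] [DecidableEq ι] [LinearOrder ι]
    (lo : LinearOrder (Gamma n)) (w : ι → Gamma n)
    (D : Matrix ι ι A → A) (hD : DetAxioms 𝒜 lo w D)
    (α0 : ι) (s : ι → A) (hs : ∀ β, s β ∈ 𝒜 (w α0 + w β)) :
    D (Rmat α0 s) = 1 + s α0 := by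
  classical
  letI := lo
  set slo : ι → A := fun β => if w β < w α0 then s β else 0 with hslo
  set sup : ι → A := fun β => if w α0 < w β then s β else 0 with hsup
  set seq : ι → A := fun β => if w β = w α0 then s β else 0 with hseq
  have hsplit : s = slo + (sup + seq) := by
    funext β
    show s β = slo β + (sup β + seq β)
    rw [hslo, hsup, hseq]
    dsimp only
    rcases lt_trichotomy (w β) (w α0) with h | h | h
    · rw [if_pos h, if_neg (asymm h), if_neg (fun e : w β = w α0 => absurd h (e ▸ lt_irrefl _)),
        add_zero, add_zero]
    · rw [if_neg (h ▸ lt_irrefl _), if_neg (h ▸ lt_irrefl _), if_pos h, zero_add, zero_add]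
    · rw [if_neg (asymm h), if_pos h, if_neg (fun e : w β = w α0 => absurd h (e ▸ lt_irrefl _)),
        zero_add, add_zero]
  have hmemlo : ∀ β, slo β ∈ 𝒜 (w α0 + w β) := fun β => by
    rw [hslo]; dsimp only; split; exacts [hs β, zero_mem _]
  have hmemup : ∀ β, sup β ∈ 𝒜 (w α0 + w β) := fun β => by
    rw [hsup]; dsimp only; split; exacts [hs β, zero_mem _]
  have hmemeq : ∀ β, seq β ∈ 𝒜 (w α0 + w β) := fun β => by
    rw [hseq]; dsimp only; split; exacts [hs β, zero_mem _]
  have hmemupeq : ∀ β, (sup + seq) β ∈ 𝒜 (w α0 + w β) := fun β =>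
    add_mem (hmemup β) (hmemeq β)
  have hslo0 : slo α0 = 0 := by rw [hslo]; dsimp only; exact if_neg (lt_irrefl _)
  have hsup0 : sup α0 = 0 := by rw [hsup]; dsimp only; exact if_neg (lt_irrefl _)
  have hfact : Rmat α0 s = Rmat α0 slo * (Rmat α0 sup * Rmat α0 seq) := by
    rw [Rmat_mul _ _ _ hsup0, Rmat_mul _ _ _ hslo0, ← hsplit]
  obtain ⟨hval, hmul, hblock, htri⟩ := hD
  have Mlo := Mdeg0_Rmat 𝒜 w α0 slo hmemlo
  have Mup := Mdeg0_Rmat 𝒜 w α0 sup hmemup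
  have Meq := Mdeg0_Rmat 𝒜 w α0 seq hmemeq
  have Mupeq : Mdeg0 𝒜 w (Rmat α0 sup * Rmat α0 seq) := by
    rw [Rmat_mul _ _ _ hsup0]; exact Mdeg0_Rmat 𝒜 w α0 _ hmemupeq
  have Dlo : D (Rmat α0 slo) = 1 := by
    refine htri _ Mlo ?_ (Or.inl ?_)
    · intro α β hwe
      have key : slo β = 0 ∨ α ≠ α0 := by
        rcases eq_or_ne α α0 with rfl | hne
        · left; rw [hslo]; dsimp only
          refine if_neg fun hlt => ?_
          rw [← hwe] at hlt
          exact lt_irrefl _ hlt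
        · right; exact hne
      have h0 : α = α0 → slo β = 0 := fun h => key.resolve_right (fun hne => hne h)
      refine (Rmat_entry_eq_diag α0 slo α β h0).trans ?_
      congr!
    · intro α β hlt
      refine Rmat_entry_zero α0 slo α β (fun e => lt_irrefl _ (e ▸ hlt)) fun h => ?_
      rw [hslo]; dsimp only
      refine if_neg fun hlt' => ?_
      rw [h] at hlt
      exact lt_irrefl _ (lt_trans hlt hlt')
  have Dup : D (Rmat α0 sup) = 1 := by
    refine htri _ Mup ?_ (Or.inr ?_)
    · intro α β hwe
      have key : sup β = 0 ∨ α ≠ α0 := by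
        rcases eq_or_ne α α0 with rfl | hne
        · left; rw [hsup]; dsimp only
          refine if_neg fun hlt => ?_
          rw [← hwe] at hlt
          exact lt_irrefl _ hlt
        · right; exact hne
      have h0 : α = α0 → sup β = 0 := fun h => key.resolve_right (fun hne => hne h)
      refine (Rmat_entry_eq_diag α0 sup α β h0).trans ?_
      congr!
    · intro α β hlt
      refine Rmat_entry_zero α0 sup α β (fun e => lt_irrefl _ (e ▸ hlt)) fun h => ?_
      rw [hsup]; dsimp only
      refine if_neg fun hlt' => ?_
      rw [h] at hlt
      exact lt_irrefl _ (lt_trans hlt hlt')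
  have Deq : D (Rmat α0 seq) = 1 + s α0 := by
    have hbd : ∀ α β, w α ≠ w β → Rmat α0 seq α β = 0 := by
      intro α β hwe
      refine Rmat_entry_zero α0 seq α β (fun e => hwe (e ▸ rfl)) fun h => ?_
      rw [hseq]; dsimp only
      refine if_neg fun he => ?_
      rw [h] at hwe
      exact hwe he.symm
    rw [hblock _ Meq hbd, detProd_Rmat lo w α0 seq]
    · rw [hseq]; dsimp only; rw [if_pos rfl]
    · intro β hβ; rw [hseq]; dsimp only; exact if_neg hβ
  rw [hfact, hmul _ _ Mlo Mupeq, hmul _ _ Mup Meq, Dlo, Dup, Deq, one_mul, one_mul]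

lemma D_Cmat {n : ℕ} {K A : Type*} [Field K] [Ring A] [Algebra K A]
    (𝒜 : Gamma n → Submodule K A) [GradedAlgebra 𝒜]
    {ι : Type*} [Fintype ι] [DecidableEq ι] [LinearOrder ι]
    (lo : LinearOrder (Gamma n)) (w : ι → Gamma n)
    (D : Matrix ι ι A → A) (hD : DetAxioms 𝒜 lo w D)
    (β0 : ι) (s : ι → A) (hs : ∀ α, s α ∈ 𝒜 (w α + w β0)) :
    D (Cmat β0 s) = 1 + s β0 := by
  classical
  letI := lo
  set slo : ι → A := fun α => if w α < w β0 then s α else 0 with hslo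
  set sup : ι → A := fun α => if w β0 < w α then s α else 0 with hsup
  set seq : ι → A := fun α => if w α = w β0 then s α else 0 with hseq
  have hsplit : s = seq + slo + sup := by
    funext α
    show s α = seq α + slo α + sup α
    rw [hslo, hsup, hseq]
    dsimp only
    rcases lt_trichotomy (w α) (w β0) with h | h | h
    · have heq : ¬ w α = w β0 := fun e => absurd h (by rw [e]; exact lt_irrefl _)
      rw [if_neg heq, if_pos h, if_neg (asymm h), zero_add, add_zero]
    · have h1 : ¬ w α < w β0 := by rw [h]; exact lt_irrefl _
      have h2 : ¬ w β0 < w α := by rw [h]; exact lt_irrefl _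
      rw [if_pos h, if_neg h1, if_neg h2, add_zero, add_zero]
    · have heq : ¬ w α = w β0 := fun e => absurd h (by rw [e]; exact lt_irrefl _)
      rw [if_neg heq, if_neg (asymm h), if_pos h, zero_add, zero_add]
  have hmemlo : ∀ α, slo α ∈ 𝒜 (w α + w β0) := fun α => by
    rw [hslo]; dsimp only; split; exacts [hs α, zero_mem _]
  have hmemup : ∀ α, sup α ∈ 𝒜 (w α + w β0) := fun α => by
    rw [hsup]; dsimp only; split; exacts [hs α, zero_mem _]
  have hmemeq : ∀ α, seq α ∈ 𝒜 (w α + w β0) := fun α => by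
    rw [hseq]; dsimp only; split; exacts [hs α, zero_mem _]
  have hmemeqlo : ∀ α, (seq + slo) α ∈ 𝒜 (w α + w β0) := fun α =>
    add_mem (hmemeq α) (hmemlo α)
  have hslo0 : slo β0 = 0 := by rw [hslo]; dsimp only; exact if_neg (lt_irrefl _)
  have hsup0 : sup β0 = 0 := by rw [hsup]; dsimp only; exact if_neg (lt_irrefl _)
  have hfact : Cmat β0 s = (Cmat β0 seq * Cmat β0 slo) * Cmat β0 sup := by
    rw [Cmat_mul _ _ _ hslo0, Cmat_mul _ _ _ hsup0, ← hsplit]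
  obtain ⟨hval, hmul, hblock, htri⟩ := hD
  have Mlo := Mdeg0_Cmat 𝒜 w β0 slo hmemlo
  have Mup := Mdeg0_Cmat 𝒜 w β0 sup hmemup
  have Meq := Mdeg0_Cmat 𝒜 w β0 seq hmemeq
  have Meqlo : Mdeg0 𝒜 w (Cmat β0 seq * Cmat β0 slo) := by
    rw [Cmat_mul _ _ _ hslo0]; exact Mdeg0_Cmat 𝒜 w β0 _ hmemeqlo
  have Dlo : D (Cmat β0 slo) = 1 := by
    refine htri _ Mlo ?_ (Or.inr ?_)
    · intro α β hwe
      have key : slo α = 0 ∨ β ≠ β0 := by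
        rcases eq_or_ne β β0 with rfl | hne
        · left; rw [hslo]; dsimp only
          refine if_neg fun hlt => ?_
          rw [hwe] at hlt
          exact lt_irrefl _ hlt
        · right; exact hne
      have h0 : β = β0 → slo α = 0 := fun h => key.resolve_right (fun hne => hne h)
      refine (Cmat_entry_eq_diag β0 slo α β h0).trans ?_
      congr!
    · intro α β hlt
      have hne : α ≠ β := fun e => by rw [e] at hlt; exact lt_irrefl _ hlt
      refine Cmat_entry_zero β0 slo α β hne fun h => ?_
      rw [hslo]; dsimp only
      refine if_neg fun hlt' => ?_
      rw [h] at hlt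
      exact lt_irrefl _ (lt_trans hlt hlt')
  have Dup : D (Cmat β0 sup) = 1 := by
    refine htri _ Mup ?_ (Or.inl ?_)
    · intro α β hwe
      have key : sup α = 0 ∨ β ≠ β0 := by
        rcases eq_or_ne β β0 with rfl | hne
        · left; rw [hsup]; dsimp only
          refine if_neg fun hlt => ?_
          rw [hwe] at hlt
          exact lt_irrefl _ hlt
        · right; exact hne
      have h0 : β = β0 → sup α = 0 := fun h => key.resolve_right (fun hne => hne h)
      refine (Cmat_entry_eq_diag β0 sup α β h0).trans ?_
      congr!
    · intro α β hlt
      have hne : α ≠ β := fun e => by rw [e] at hlt; exact lt_irrefl _ hlt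
      refine Cmat_entry_zero β0 sup α β hne fun h => ?_
      rw [hsup]; dsimp only
      refine if_neg fun hlt' => ?_
      rw [h] at hlt
      exact lt_irrefl _ (lt_trans hlt hlt')
  have Deq : D (Cmat β0 seq) = 1 + s β0 := by
    have hbd : ∀ α β, w α ≠ w β → Cmat β0 seq α β = 0 := by
      intro α β hwe
      refine Cmat_entry_zero β0 seq α β (fun e => hwe (e ▸ rfl)) fun h => ?_
      rw [hseq]; dsimp only
      refine if_neg fun he => ?_
      rw [h] at hwe
      exact hwe he
    rw [hblock _ Meq hbd, detProd_Cmat lo w β0 seq]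
    rw [hseq]; dsimp only; rw [if_pos rfl]
  rw [hfact, hmul _ _ Meqlo Mup, hmul _ _ Meq Mlo, Dlo, Dup, Deq, mul_one, mul_one]

lemma add_cancel_mid {n : ℕ} (a x b : Gamma n) : (a + x) + (x + b) = a + b := by
  rw [add_assoc, ← add_assoc x x b, gamma_add_self, zero_add]

theorem graded_det_elementary_even {n N₁ N₂ : ℕ} (hn : 1 ≤ n) (hN₁ : 1 ≤ N₁) (hN₂ : 1 ≤ N₂)
    {K A : Type*} [Field K] [CharZero K] [Ring A] [Algebra K A]
    (𝒜 : Gamma n → Submodule K A) [GradedAlgebra 𝒜] (hcomm : GradedComm 𝒜)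
    (u : Fin N₁ → Gamma n) (hu : ∀ α, GammaEven (u α))
    (v : Fin N₂ → Gamma n) (hv : ∀ j, GammaEven (v j))
    (lo : LinearOrder (Gamma n))
    (Du : Matrix (Fin N₁) (Fin N₁) A → A) (hDu : DetAxioms 𝒜 lo u Du)
    (Dv : Matrix (Fin N₂) (Fin N₂) A → A) (hDv : DetAxioms 𝒜 lo v Dv)
    (P : Matrix (Fin N₁) (Fin N₂) A) (hP : ∀ α j, P α j ∈ 𝒜 (u α + v j))
    (Q : Matrix (Fin N₂) (Fin N₁) A) (hQ : ∀ j α, Q j α ∈ 𝒜 (v j + u α))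
    (hel : Elementary P ∨ Elementary Q) :
    Mdeg0 𝒜 u (1 + P * Q) ∧ Mdeg0 𝒜 v (1 + Q * P) ∧
      Du (1 + P * Q) = Dv (1 + Q * P) := by
  classical
  rcases hel with helP | helQ
  · -- P is elementary
    have hex : ∃ α0 j0, ∀ α j, P α j ≠ 0 → α = α0 ∧ j = j0 := by
      by_cases hz : ∃ α j, P α j ≠ 0
      · obtain ⟨a, b, hab⟩ := hz
        exact ⟨a, b, fun α j h => helP α j a b h hab⟩
      · push_neg at hz
        exact ⟨⟨0, hN₁⟩, ⟨0, hN₂⟩, fun α j h => absurd (hz α j) h⟩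
    obtain ⟨α0, j0, hsupp⟩ := hex
    set r : Fin N₁ → A := fun β => P α0 j0 * Q j0 β with hr
    set c : Fin N₂ → A := fun j => Q j α0 * P α0 j0 with hc
    have hPQ : 1 + P * Q = Rmat α0 r := by
      ext α β
      rw [Matrix.add_apply, Rmat_apply, Matrix.one_apply]
      congr 1
      rw [Matrix.mul_apply]
      rcases eq_or_ne α α0 with rfl | hne
      · rw [if_pos rfl, hr]
        refine Finset.sum_eq_single j0 (fun j _ hj => ?_) (fun h => absurd (Finset.mem_univ _) h)
        rcases eq_or_ne (P α j) 0 with h0 | h0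
        · rw [h0, zero_mul]
        · exact absurd (hsupp α j h0).2 hj
      · rw [if_neg hne]
        refine Finset.sum_eq_zero fun j _ => ?_
        rcases eq_or_ne (P α j) 0 with h0 | h0
        · rw [h0, zero_mul]
        · exact absurd (hsupp α j h0).1 hne
    have hQP : 1 + Q * P = Cmat j0 c := by
      ext j k
      rw [Matrix.add_apply, Cmat_apply, Matrix.one_apply]
      congr 1
      rw [Matrix.mul_apply]
      rcases eq_or_ne k j0 with rfl | hne
      · rw [if_pos rfl, hc]
        refine Finset.sum_eq_single α0 (fun α _ hα => ?_) (fun h => absurd (Finset.mem_univ _) h)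
        rcases eq_or_ne (P α k) 0 with h0 | h0
        · rw [h0, mul_zero]
        · exact absurd (hsupp α k h0).1 hα
      · rw [if_neg hne]
        refine Finset.sum_eq_zero fun α _ => ?_
        rcases eq_or_ne (P α k) 0 with h0 | h0
        · rw [h0, mul_zero]
        · exact absurd (hsupp α k h0).2 hne
    have hmemr : ∀ β, r β ∈ 𝒜 (u α0 + u β) := fun β => by
      rw [hr]; dsimp only
      have := SetLike.mul_mem_graded (hP α0 j0) (hQ j0 β)
      rwa [add_cancel_mid] at this
    have hmemc : ∀ j, c j ∈ 𝒜 (v j + v j0) := fun j => by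
      rw [hc]; dsimp only
      have := SetLike.mul_mem_graded (hQ j α0) (hP α0 j0)
      rwa [add_cancel_mid] at this
    refine ⟨by rw [hPQ]; exact Mdeg0_Rmat 𝒜 u α0 r hmemr,
      by rw [hQP]; exact Mdeg0_Cmat 𝒜 v j0 c hmemc, ?_⟩
    rw [hPQ, hQP, D_Rmat 𝒜 lo u Du hDu α0 r hmemr, D_Cmat 𝒜 lo v Dv hDv j0 c hmemc]
    rw [hr, hc]
    dsimp only
    congr 1
    have hδ : v j0 + u α0 = u α0 + v j0 := add_comm _ _
    have hcm := hcomm (u α0 + v j0) (v j0 + u α0) (P α0 j0) (Q j0 α0) (hP α0 j0) (hQ j0 α0)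
    rw [hδ, gsign_of_zero (even_add_even (hu α0) (hv j0)), one_smul] at hcm
    exact hcm.symm
  · -- Q is elementary
    have hex : ∃ j0 α0, ∀ j α, Q j α ≠ 0 → j = j0 ∧ α = α0 := by
      by_cases hz : ∃ j α, Q j α ≠ 0
      · obtain ⟨a, b, hab⟩ := hz
        exact ⟨a, b, fun j α h => helQ j α a b h hab⟩
      · push_neg at hz
        exact ⟨⟨0, hN₂⟩, ⟨0, hN₁⟩, fun j α h => absurd (hz j α) h⟩
    obtain ⟨j0, α0, hsupp⟩ := hex
    set cc : Fin N₁ → A := fun α => P α j0 * Q j0 α0 with hcc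
    set rr : Fin N₂ → A := fun k => Q j0 α0 * P α0 k with hrr
    have hPQ : 1 + P * Q = Cmat α0 cc := by
      ext α β
      rw [Matrix.add_apply, Cmat_apply, Matrix.one_apply]
      congr 1
      rw [Matrix.mul_apply]
      rcases eq_or_ne β α0 with rfl | hne
      · rw [if_pos rfl, hcc]
        refine Finset.sum_eq_single j0 (fun j _ hj => ?_) (fun h => absurd (Finset.mem_univ _) h)
        rcases eq_or_ne (Q j β) 0 with h0 | h0
        · rw [h0, mul_zero]
        · exact absurd (hsupp j β h0).1 hj
      · rw [if_neg hne]
        refine Finset.sum_eq_zero fun j _ => ?_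
        rcases eq_or_ne (Q j β) 0 with h0 | h0
        · rw [h0, mul_zero]
        · exact absurd (hsupp j β h0).2 hne
    have hQP : 1 + Q * P = Rmat j0 rr := by
      ext j k
      rw [Matrix.add_apply, Rmat_apply, Matrix.one_apply]
      congr 1
      rw [Matrix.mul_apply]
      rcases eq_or_ne j j0 with rfl | hne
      · rw [if_pos rfl, hrr]
        refine Finset.sum_eq_single α0 (fun α _ hα => ?_) (fun h => absurd (Finset.mem_univ _) h)
        rcases eq_or_ne (Q j α) 0 with h0 | h0
        · rw [h0, zero_mul]
        · exact absurd (hsupp j α h0).2 hα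
      · rw [if_neg hne]
        refine Finset.sum_eq_zero fun α _ => ?_
        rcases eq_or_ne (Q j α) 0 with h0 | h0
        · rw [h0, zero_mul]
        · exact absurd (hsupp j α h0).1 hne
    have hmemcc : ∀ α, cc α ∈ 𝒜 (u α + u α0) := fun α => by
      rw [hcc]; dsimp only
      have := SetLike.mul_mem_graded (hP α j0) (hQ j0 α0)
      rwa [add_cancel_mid] at this
    have hmemrr : ∀ k, rr k ∈ 𝒜 (v j0 + v k) := fun k => by
      rw [hrr]; dsimp only
      have := SetLike.mul_mem_graded (hQ j0 α0) (hP α0 k)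
      rwa [add_cancel_mid] at this
    refine ⟨by rw [hPQ]; exact Mdeg0_Cmat 𝒜 u α0 cc hmemcc,
      by rw [hQP]; exact Mdeg0_Rmat 𝒜 v j0 rr hmemrr, ?_⟩
    rw [hPQ, hQP, D_Cmat 𝒜 lo u Du hDu α0 cc hmemcc, D_Rmat 𝒜 lo v Dv hDv j0 rr hmemrr]
    rw [hcc, hrr]
    dsimp only
    congr 1
    have hδ : v j0 + u α0 = u α0 + v j0 := add_comm _ _
    have hcm := hcomm (u α0 + v j0) (v j0 + u α0) (P α0 j0) (Q j0 α0) (hP α0 j0) (hQ j0 α0)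
    rw [hδ, gsign_of_zero (even_add_even (hu α0) (hv j0)), one_smul] at hcm
    exact hcm.symm
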